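/- arXiv:2401.05180 — 4 statements merged into one kernel-verified Lean document; each statement's English description precedes it below -/
import Mathlib

section
/- For all real numbers φ and c and every vector ξ = (ξ₁, ξ₂) ∈ ℝ², the quadratic form of the mobility matrix satisfies ξᵀ B(φ,c) ξ = M(φ)(ξ₁ − c ξ₂)² + c e^{−φ} ξ₂². In particular, if c ≥ 0 then ξᵀ B(φ,c) ξ ≥ 0, i.e. B(φ,c) is positive semidefinite. -/
open Matrix

/-- The degenerate mobility `M(φ) = φ²(1-φ)²`. -/
noncomputable def M (φ : ℝ) : ℝ := φ ^ 2 * (1 - φ) ^ 2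

/-- The mobility matrix `B(φ,c)` of the Cahn–Hilliard cross-diffusion system. -/
noncomputable def B (φ c : ℝ) : Matrix (Fin 2) (Fin 2) ℝ :=
  !![M φ, -c * M φ; -c * M φ, c * Real.exp (-φ) + c ^ 2 * M φ]

theorem mobility_matrix_quadratic_form (φ c : ℝ) (ξ : Fin 2 → ℝ) :
    ξ ⬝ᵥ (B φ c).mulVec ξ
      = M φ * (ξ 0 - c * ξ 1) ^ 2 + c * Real.exp (-φ) * (ξ 1) ^ 2
    ∧ (0 ≤ c → 0 ≤ ξ ⬝ᵥ (B φ c).mulVec ξ) := by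
  have h : ξ ⬝ᵥ (B φ c).mulVec ξ
      = M φ * (ξ 0 - c * ξ 1) ^ 2 + c * Real.exp (-φ) * (ξ 1) ^ 2 := by
    simp [B, dotProduct, mulVec, Fin.sum_univ_two]
    ring
  refine ⟨h, fun hc => ?_⟩
  rw [h]
  have hM : 0 ≤ M φ := mul_nonneg (sq_nonneg _) (sq_nonneg _)
  have := Real.exp_nonneg (-φ)
  apply add_nonneg
  · exact mul_nonneg hM (sq_nonneg _)
  · exact mul_nonneg (mul_nonneg hc this) (sq_nonneg _)
end

section
/- For every δ with 0 < δ < 1/2 and every φ ≥ 1−δ, the entropy density with cutoff satisfies the quadratic lower bound Φ_δ(φ) ≥ (φ − (1−δ))² / (2 δ² (1−δ)²). -/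
/-- The truncated (nondegenerate) mobility `M_δ`. -/
noncomputable def Md (δ φ : ℝ) : ℝ :=
  if φ ≤ δ then M δ else if φ ≤ 1 - δ then M φ else M (1 - δ)

/-- The entropy density with cutoff `Φ_δ(φ) = ∫_{1/2}^{φ} ∫_{1/2}^{s} dr ds / M_δ(r)`. -/
noncomputable def Phid (δ φ : ℝ) : ℝ :=
  ∫ s in (1 / 2 : ℝ)..φ, ∫ r in (1 / 2 : ℝ)..s, 1 / Md δ r

open intervalIntegral MeasureTheory

/-- Quadratic lower bound for `Φ_δ` above `1 - δ`. -/
theorem entropy_cutoff_quadratic_bound_right (δ : ℝ) (hδ0 : 0 < δ) (hδ : δ < 1 / 2)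
    (φ : ℝ) (hφ : 1 - δ ≤ φ) :
    Phid δ φ ≥ (φ - (1 - δ)) ^ 2 / (2 * δ ^ 2 * (1 - δ) ^ 2) := by
  set c : ℝ := δ ^ 2 * (1 - δ) ^ 2 with hc_def
  have h1δ : 0 < 1 - δ := by linarith
  have hc : 0 < c := mul_pos (pow_pos hδ0 2) (pow_pos h1δ 2)
  set f : ℝ → ℝ := fun r => 1 / Md δ r with hf_def
  have hMd_ge : ∀ r, c ≤ Md δ r := by
    intro r
    unfold Md M
    split_ifs with h1 h2
    · simp [hc_def]
    · push_neg at h1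
      nlinarith [mul_nonneg (sub_nonneg.2 h1.le) (by linarith : (0:ℝ) ≤ 1 - δ - r),
        mul_pos hδ0 h1δ, mul_nonneg (by linarith : (0:ℝ) ≤ r) (by linarith : (0:ℝ) ≤ 1 - r)]
    · have h : (1 - δ) ^ 2 * (1 - (1 - δ)) ^ 2 = c := by rw [hc_def]; ring
      rw [h]
  have hf_nonneg : ∀ r, 0 ≤ f r := fun r =>
    div_nonneg zero_le_one (le_of_lt (lt_of_lt_of_le hc (hMd_ge r)))
  have hf_le : ∀ r, f r ≤ 1 / c := fun r => one_div_le_one_div_of_le hc (hMd_ge r)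
  have hf_eq : ∀ r, 1 - δ ≤ r → f r = 1 / c := by
    intro r hr
    simp only [hf_def]
    unfold Md M
    split_ifs with h1 h2
    · linarith
    · have : r = 1 - δ := le_antisymm h2 hr
      rw [this]; ring_nf; rw [hc_def]; ring
    · ring_nf; rw [hc_def]; ring
  -- measurability and integrability of f
  have hM_meas : Measurable M := by unfold M; fun_prop
  have hMd_meas : Measurable (Md δ) := by
    unfold Md
    exact Measurable.ite (measurableSet_le measurable_id measurable_const) measurable_const
      (Measurable.ite (measurableSet_le measurable_id measurable_const) hM_meas measurable_const)
  have hf_meas : Measurable f := measurable_const.div hMd_meas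
  have hf_int : ∀ a b : ℝ, IntervalIntegrable f volume a b := by
    intro a b
    rw [intervalIntegrable_iff]
    apply Integrable.mono' (g := fun _ => 1 / c)
      (integrableOn_const measure_Ioc_lt_top.ne)
      hf_meas.aestronglyMeasurable
    filter_upwards with x
    rw [Real.norm_eq_abs, abs_of_nonneg (hf_nonneg x)]
    exact hf_le x
  set g : ℝ → ℝ := fun s => ∫ r in (1 / 2 : ℝ)..s, f r with hg_def
  have hg_cont : Continuous g := intervalIntegral.continuous_primitive hf_int (1/2)
  -- lower bound for g on [1-δ, φ]
  have hg_lb : ∀ s, 1 - δ ≤ s → (s - (1 - δ)) / c ≤ g s := by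
    intro s hs
    have hsplit : g s = (∫ r in (1/2 : ℝ)..(1 - δ), f r) + ∫ r in (1 - δ : ℝ)..s, f r := by
      rw [hg_def]
      exact (intervalIntegral.integral_add_adjacent_intervals (hf_int _ _) (hf_int _ _)).symm
    have h1 : (0:ℝ) ≤ ∫ r in (1/2 : ℝ)..(1 - δ), f r :=
      intervalIntegral.integral_nonneg (by linarith) (fun r _ => hf_nonneg r)
    have h2 : (∫ r in (1 - δ : ℝ)..s, f r) = (s - (1 - δ)) * (1 / c) := by
      rw [intervalIntegral.integral_congr (g := fun _ => 1 / c)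
        (by
          rw [Set.uIcc_of_le hs]
          intro r hr
          exact hf_eq r hr.1)]
      simp
    rw [hsplit, h2]
    have : (s - (1 - δ)) / c = (s - (1 - δ)) * (1 / c) := by ring
    linarith
  have hg_nonneg : ∀ s, 1/2 ≤ s → 0 ≤ g s := fun s hs =>
    intervalIntegral.integral_nonneg hs (fun r _ => hf_nonneg r)
  -- split the outer integral
  have hPhid : Phid δ φ = (∫ s in (1/2 : ℝ)..(1 - δ), g s) + ∫ s in (1 - δ : ℝ)..φ, g s := by
    unfold Phid
    exact (intervalIntegral.integral_add_adjacent_intervals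
      (hg_cont.intervalIntegrable _ _) (hg_cont.intervalIntegrable _ _)).symm
  have hpart1 : (0:ℝ) ≤ ∫ s in (1/2 : ℝ)..(1 - δ), g s :=
    intervalIntegral.integral_nonneg (by linarith) (fun s hs => hg_nonneg s hs.1)
  have hpart2 : (∫ s in (1 - δ : ℝ)..φ, (s - (1 - δ)) / c) ≤ ∫ s in (1 - δ : ℝ)..φ, g s := by
    apply intervalIntegral.integral_mono_on hφ
    · exact ((continuous_id.sub continuous_const).div_const c).intervalIntegrable _ _
    · exact hg_cont.intervalIntegrable _ _
    · exact fun s hs => hg_lb s hs.1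
  have hcomp : (∫ s in (1 - δ : ℝ)..φ, (s - (1 - δ)) / c)
      = (φ - (1 - δ)) ^ 2 / (2 * c) := by
    have : (∫ s in (1 - δ : ℝ)..φ, (s - (1 - δ)) / c)
        = (∫ s in (1 - δ : ℝ)..φ, (s - (1 - δ))) / c := by
      simp only [div_eq_mul_inv]
      exact intervalIntegral.integral_mul_const _ _
    rw [this]
    have h2 : (∫ s in (1 - δ : ℝ)..φ, (s - (1 - δ)))
        = ∫ x in (1 - δ - (1 - δ) : ℝ)..(φ - (1 - δ)), x :=
      intervalIntegral.integral_comp_sub_right (fun x => x) (1 - δ)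
    rw [h2]
    rw [integral_id]
    field_simp
    ring
  have hgoal : (φ - (1 - δ)) ^ 2 / (2 * δ ^ 2 * (1 - δ) ^ 2) = (φ - (1 - δ)) ^ 2 / (2 * c) := by
    rw [hc_def]; ring_nf
  rw [ge_iff_le, hgoal, hPhid, ← hcomp]
  linarith
end

section
/- For every δ with 0 < δ < 1/2 and every φ ≤ δ, the entropy density with cutoff satisfies the quadratic lower bound Φ_δ(φ) ≥ (δ − φ)² / (2 δ² (1−δ)²). -/
/-- Quadratic lower bound for `Φ_δ` below `δ`. -/
theorem entropy_cutoff_quadratic_bound_left (δ : ℝ) (hδ0 : 0 < δ) (hδ : δ < 1 / 2)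
    (φ : ℝ) (hφ : φ ≤ δ) :
    Phid δ φ ≥ (δ - φ) ^ 2 / (2 * δ ^ 2 * (1 - δ) ^ 2) := by
  have hδ1 : (0:ℝ) < 1 - δ := by linarith
  have hMδ : 0 < M δ := by unfold M; positivity
  have hMd_pos : ∀ r, 0 < Md δ r := by
    intro r
    unfold Md
    split_ifs with h1 h2
    · exact hMδ
    · push_neg at h1
      have hr0 : 0 < r := lt_trans hδ0 h1
      have hr1 : 0 < 1 - r := by linarith
      unfold M; positivity
    · unfold M
      have : (0:ℝ) < 1 - (1 - δ) := by linarith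
      positivity
  have hMd_ge : ∀ r, M δ ≤ Md δ r := by
    intro r
    unfold Md
    split_ifs with h1 h2
    · exact le_refl _
    · push_neg at h1
      have key : δ * (1 - δ) ≤ r * (1 - r) := by nlinarith
      have h0 : 0 ≤ δ * (1 - δ) := by positivity
      unfold M; nlinarith
    · unfold M; nlinarith [sq_nonneg δ, sq_nonneg (1 - δ)]
  have hmeasMd : Measurable (Md δ) := by
    unfold Md
    exact Measurable.ite (measurableSet_le measurable_id measurable_const)
      measurable_const
      (Measurable.ite (measurableSet_le measurable_id measurable_const)
        (by unfold M; fun_prop) measurable_const)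
  have hmeas : Measurable (fun r => 1 / Md δ r) := measurable_const.div hmeasMd
  have hg_nonneg : ∀ r, 0 ≤ 1 / Md δ r := fun r => le_of_lt (one_div_pos.mpr (hMd_pos r))
  have hg_int : ∀ a b : ℝ, IntervalIntegrable (fun r => 1 / Md δ r) MeasureTheory.volume a b := by
    intro a b
    apply (intervalIntegrable_const (c := 1 / M δ)).mono_fun
      hmeas.aestronglyMeasurable
    filter_upwards with r
    have h1 : 1 / Md δ r ≤ 1 / M δ := one_div_le_one_div_of_le hMδ (hMd_ge r)
    rw [Real.norm_eq_abs, Real.norm_eq_abs, abs_of_nonneg (hg_nonneg r),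
      abs_of_nonneg (le_of_lt (by positivity : (0:ℝ) < 1 / M δ))]
    exact h1
  set F : ℝ → ℝ := fun s => ∫ r in s..(1/2:ℝ), 1 / Md δ r with hF
  have hFcont : Continuous F := by
    have h1 : Continuous fun s => ∫ r in (1/2:ℝ)..s, 1 / Md δ r :=
      intervalIntegral.continuous_primitive hg_int (1/2 : ℝ)
    have : F = fun s => -∫ r in (1/2:ℝ)..s, 1 / Md δ r := by
      funext s
      exact intervalIntegral.integral_symm (1/2 : ℝ) s
    rw [this]
    exact h1.neg
  have hPh : Phid δ φ = ∫ s in φ..(1/2:ℝ), F s := by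
    unfold Phid
    rw [intervalIntegral.integral_symm φ (1/2 : ℝ), ← intervalIntegral.integral_neg]
    apply intervalIntegral.integral_congr
    intro s _
    exact (intervalIntegral.integral_symm (1/2 : ℝ) s).symm
  set h : ℝ → ℝ := fun s => max (δ - s) 0 / M δ with hh
  have hh_cont : Continuous h :=
    ((continuous_const.sub continuous_id).max continuous_const).div_const _
  have hφ2 : φ ≤ (1/2:ℝ) := by linarith
  have step1 : ∫ s in φ..(1/2:ℝ), h s ≤ ∫ s in φ..(1/2:ℝ), F s := by
    apply intervalIntegral.integral_mono_on hφ2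
      (hh_cont.intervalIntegrable _ _)
      (hFcont.intervalIntegrable _ _)
    intro s hs
    by_cases hsδ : s ≤ δ
    · have hsplit : F s = (∫ r in s..δ, 1 / Md δ r) + ∫ r in δ..(1/2:ℝ), 1 / Md δ r :=
        (intervalIntegral.integral_add_adjacent_intervals (hg_int s δ) (hg_int δ (1/2))).symm
      have h1 : (∫ r in s..δ, 1 / Md δ r) = (δ - s) / M δ := by
        rw [intervalIntegral.integral_congr (g := fun _ => 1 / M δ)
          (by
            intro r hr
            rw [Set.uIcc_of_le hsδ] at hr
            show 1 / Md δ r = 1 / M δ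
            unfold Md
            rw [if_pos hr.2])]
        simp [smul_eq_mul]
        ring
      have h2 : 0 ≤ ∫ r in δ..(1/2:ℝ), 1 / Md δ r :=
        intervalIntegral.integral_nonneg (le_of_lt hδ) (fun r _ => hg_nonneg r)
      have h3 : h s = (δ - s) / M δ := by
        simp only [hh, max_eq_left (by linarith : (0:ℝ) ≤ δ - s)]
      rw [h3, hsplit, h1]
      linarith
    · push_neg at hsδ
      have h3 : h s = 0 := by
        simp only [hh, max_eq_right (by linarith : δ - s ≤ (0:ℝ))]
        simp
      have h4 : 0 ≤ F s :=
        intervalIntegral.integral_nonneg hs.2 (fun r _ => hg_nonneg r)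
      rw [h3]; exact h4
  have step2 : ∫ s in φ..(1/2:ℝ), h s = (δ - φ)^2 / 2 / M δ := by
    have hsplit : (∫ s in φ..δ, h s) + (∫ s in δ..(1/2:ℝ), h s) = ∫ s in φ..(1/2:ℝ), h s :=
      intervalIntegral.integral_add_adjacent_intervals
        (hh_cont.intervalIntegrable _ _) (hh_cont.intervalIntegrable _ _)
    have h1 : (∫ s in φ..δ, h s) = (δ - φ)^2 / 2 / M δ := by
      rw [intervalIntegral.integral_congr (g := fun s => (δ - s) / M δ)
        (by
          intro s hs
          rw [Set.uIcc_of_le hφ] at hs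
          show h s = (δ - s) / M δ
          simp only [hh, max_eq_left (by linarith [hs.2] : (0:ℝ) ≤ δ - s)])]
      rw [intervalIntegral.integral_div]
      congr 1
      rw [intervalIntegral.integral_sub intervalIntegrable_const
        intervalIntegral.intervalIntegrable_id, intervalIntegral.integral_const,
        show (∫ x in φ..δ, x) = (δ ^ 2 - φ ^ 2) / 2 from integral_id]
      simp [smul_eq_mul]
      ring
    have h2 : (∫ s in δ..(1/2:ℝ), h s) = 0 := by
      rw [intervalIntegral.integral_congr (g := fun _ => (0:ℝ))
        (by
          intro s hs
          rw [Set.uIcc_of_le (le_of_lt hδ)] at hs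
          show h s = 0
          simp only [hh, max_eq_right (by linarith [hs.1] : δ - s ≤ (0:ℝ))]
          simp)]
      simp
    rw [← hsplit, h1, h2, add_zero]
  have hfinal : (δ - φ)^2 / 2 / M δ = (δ - φ) ^ 2 / (2 * δ ^ 2 * (1 - δ) ^ 2) := by
    unfold M
    rw [div_div]
    ring_nf
  rw [hPh, ge_iff_le, ← hfinal, ← step2]
  exact step1
end

section
/- Let (X, μ) be a measure space, let φ : X → ℝ be measurable, let α > 0, and let 0 < δ < 1/2. Then the measure of the super-level set V_α = {x ∈ X : φ(x) ≥ 1 + α} obeys the Chebyshev-type bound α² μ(V_α) ≤ 2 δ² (1−δ)² ∫_X Φ_δ(φ(x)) dμ(x). -/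
open MeasureTheory

lemma M_pos' {x : ℝ} (h0 : 0 < x) (h1 : x < 1) : 0 < M x := by
  have : 0 < 1 - x := by linarith
  unfold M; positivity

lemma Md_pos' {δ : ℝ} (hδ0 : 0 < δ) (hδ : δ < 1 / 2) (r : ℝ) : 0 < Md δ r := by
  unfold Md
  split_ifs with h1 h2
  · exact M_pos' hδ0 (by linarith)
  · exact M_pos' (by linarith) (by linarith)
  · exact M_pos' (by linarith) (by linarith)

lemma Md_eq_clamp {δ : ℝ} (hδ : δ ≤ 1 - δ) (r : ℝ) :
    Md δ r = M (min (max r δ) (1 - δ)) := by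
  unfold Md
  split_ifs with h1 h2
  · rw [max_eq_right h1, min_eq_left hδ]
  · rw [max_eq_left (le_of_not_ge h1), min_eq_left h2]
  · rw [max_eq_left (le_of_not_ge h1), min_eq_right (le_of_not_ge h2)]

lemma Md_continuous' {δ : ℝ} (hδ : δ ≤ 1 - δ) : Continuous (Md δ) := by
  have hM : Continuous M := by unfold M; continuity
  have : Continuous fun r : ℝ => M (min (max r δ) (1 - δ)) :=
    hM.comp ((continuous_id.max continuous_const).min continuous_const)
  simpa [funext (Md_eq_clamp hδ)] using this

lemma Md_eq_of_one_le {δ : ℝ} (hδ0 : 0 < δ) (hδ : δ < 1 / 2) {r : ℝ} (hr : 1 ≤ r) :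
    Md δ r = δ ^ 2 * (1 - δ) ^ 2 := by
  unfold Md
  rw [if_neg (by linarith), if_neg (by linarith)]
  unfold M; ring

lemma g_cont {δ : ℝ} (hδ0 : 0 < δ) (hδ : δ < 1 / 2) :
    Continuous fun r => 1 / Md δ r :=
  continuous_const.div (Md_continuous' (by linarith)) (fun r => (Md_pos' hδ0 hδ r).ne')

lemma h_cont {δ : ℝ} (hδ0 : 0 < δ) (hδ : δ < 1 / 2) :
    Continuous fun s : ℝ => ∫ r in (1 / 2 : ℝ)..s, 1 / Md δ r :=
  intervalIntegral.continuous_primitive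
    (fun a b => ((g_cont hδ0 hδ).intervalIntegrable a b)) _

lemma Phid_cont {δ : ℝ} (hδ0 : 0 < δ) (hδ : δ < 1 / 2) : Continuous (Phid δ) :=
  intervalIntegral.continuous_primitive
    (fun a b => ((h_cont hδ0 hδ).intervalIntegrable a b)) _

lemma Phid_lower {δ : ℝ} (hδ0 : 0 < δ) (hδ : δ < 1 / 2) {u : ℝ} (hu : 1 ≤ u) :
    (u - 1) ^ 2 / (2 * (δ ^ 2 * (1 - δ) ^ 2)) ≤ Phid δ u := by
  set m : ℝ := δ ^ 2 * (1 - δ) ^ 2 with hm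
  have hm0 : 0 < m := by
    have h1δ : 0 < 1 - δ := by linarith
    positivity
  set g : ℝ → ℝ := fun r => 1 / Md δ r with hg
  set h : ℝ → ℝ := fun s => ∫ r in (1 / 2 : ℝ)..s, g r with hh
  have hgc : Continuous g := g_cont hδ0 hδ
  have hhc : Continuous h := h_cont hδ0 hδ
  have hg0 : ∀ r, 0 ≤ g r := fun r => le_of_lt (by
    have := Md_pos' hδ0 hδ r
    positivity)
  -- h s ≥ (s-1)/m for s ≥ 1
  have hhl : ∀ s : ℝ, 1 ≤ s → (s - 1) / m ≤ h s := by
    intro s hs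
    have hsplit : h s = (∫ r in (1/2:ℝ)..1, g r) + ∫ r in (1:ℝ)..s, g r := by
      rw [hh]
      exact (intervalIntegral.integral_add_adjacent_intervals
        (hgc.intervalIntegrable _ _) (hgc.intervalIntegrable _ _)).symm
    have h1 : 0 ≤ ∫ r in (1/2:ℝ)..1, g r :=
      intervalIntegral.integral_nonneg (by norm_num) (fun r _ => hg0 r)
    have h2 : (∫ r in (1:ℝ)..s, g r) = (s - 1) / m := by
      have : ∀ r ∈ Set.uIcc (1:ℝ) s, g r = 1 / m := by
        intro r hr
        rw [Set.uIcc_of_le hs] at hr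
        simp only [hg]
        rw [Md_eq_of_one_le hδ0 hδ hr.1]
      rw [intervalIntegral.integral_congr this]
      simp [smul_eq_mul]
      ring
    rw [hsplit, h2]
    linarith
  have h0 : ∀ s : ℝ, 1/2 ≤ s → 0 ≤ h s := fun s hs =>
    intervalIntegral.integral_nonneg hs (fun r _ => hg0 r)
  -- Phid δ u = ∫_{1/2}^1 h + ∫_1^u h ≥ 0 + ∫_1^u (s-1)/m
  have hsplit : Phid δ u = (∫ s in (1/2:ℝ)..1, h s) + ∫ s in (1:ℝ)..u, h s := by
    unfold Phid
    exact (intervalIntegral.integral_add_adjacent_intervals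
      (hhc.intervalIntegrable _ _) (hhc.intervalIntegrable _ _)).symm
  have hA : 0 ≤ ∫ s in (1/2:ℝ)..1, h s :=
    intervalIntegral.integral_nonneg (by norm_num) (fun s hs => h0 s hs.1)
  have hB : (∫ s in (1:ℝ)..u, (s - 1) / m) ≤ ∫ s in (1:ℝ)..u, h s := by
    apply intervalIntegral.integral_mono_on hu
    · exact (Continuous.intervalIntegrable (by continuity) _ _)
    · exact hhc.intervalIntegrable _ _
    · exact fun s hs => hhl s hs.1
  have hC : (∫ s in (1:ℝ)..u, (s - 1) / m) = (u - 1) ^ 2 / (2 * m) := by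
    have : (∫ s in (1:ℝ)..u, (s - 1)) = (u - 1) ^ 2 / 2 := by
      have := intervalIntegral.integral_comp_sub_right (a := (1:ℝ)) (b := u)
        (fun s => s) 1
      simpa using this
    rw [intervalIntegral.integral_div, this, div_div]
  rw [hsplit]
  rw [hC] at hB
  linarith

/-- Chebyshev-type bound for the measure of the super-level set `{φ ≥ 1 + α}`. -/
theorem superlevel_set_chebyshev_bound {X : Type*} [MeasurableSpace X] (μ : Measure X)
    (φ : X → ℝ) (hφ : Measurable φ) (α : ℝ) (hα : 0 < α)
    (δ : ℝ) (hδ0 : 0 < δ) (hδ : δ < 1 / 2) :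
    ENNReal.ofReal (α ^ 2) * μ {x | 1 + α ≤ φ x}
      ≤ ENNReal.ofReal (2 * δ ^ 2 * (1 - δ) ^ 2)
        * ∫⁻ x, ENNReal.ofReal (Phid δ (φ x)) ∂μ := by
  set m : ℝ := δ ^ 2 * (1 - δ) ^ 2 with hm
  have hm0 : 0 < m := by
    have h1δ : 0 < 1 - δ := by linarith
    positivity
  set f : X → ENNReal := fun x => ENNReal.ofReal (Phid δ (φ x)) with hf
  have hfm : AEMeasurable f μ :=
    (ENNReal.measurable_ofReal.comp ((Phid_cont hδ0 hδ).measurable.comp hφ)).aemeasurable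
  set c : ENNReal := ENNReal.ofReal (α ^ 2 / (2 * m)) with hc
  have hsub : {x | 1 + α ≤ φ x} ⊆ {x | c ≤ f x} := by
    intro x hx
    simp only [Set.mem_setOf_eq] at hx ⊢
    have hx' : (1 : ℝ) ≤ φ x := by linarith
    have h1 : (φ x - 1) ^ 2 / (2 * m) ≤ Phid δ (φ x) := Phid_lower hδ0 hδ hx'
    have h2 : α ^ 2 / (2 * m) ≤ (φ x - 1) ^ 2 / (2 * m) := by
      gcongr
      all_goals linarith
    exact ENNReal.ofReal_le_ofReal (h2.trans h1)
  have heq : ENNReal.ofReal (α ^ 2) = ENNReal.ofReal (2 * m) * c := by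
    rw [hc, ← ENNReal.ofReal_mul (by positivity)]
    congr 1
    field_simp
  have key : c * μ {x | 1 + α ≤ φ x} ≤ ∫⁻ x, f x ∂μ :=
    calc c * μ {x | 1 + α ≤ φ x} ≤ c * μ {x | c ≤ f x} := mul_le_mul_right (measure_mono hsub) c
      _ ≤ ∫⁻ x, f x ∂μ := mul_meas_ge_le_lintegral₀ hfm c
  calc ENNReal.ofReal (α ^ 2) * μ {x | 1 + α ≤ φ x}
      = ENNReal.ofReal (2 * m) * (c * μ {x | 1 + α ≤ φ x}) := by rw [heq, mul_assoc]
    _ ≤ ENNReal.ofReal (2 * m) * ∫⁻ x, f x ∂μ := by gcongr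
    _ = ENNReal.ofReal (2 * δ ^ 2 * (1 - δ) ^ 2) * ∫⁻ x, f x ∂μ := by
        rw [show 2 * m = 2 * δ ^ 2 * (1 - δ) ^ 2 by rw [hm]; ring]
end
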